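/- Truncation bounds for spherical integrals: let N be a positive integer, D = diag(d_1,…,d_N) a real diagonal matrix with all d_i ≤ 0, E = diag(e_1,…,e_N) a real diagonal matrix with all e_i ≥ 0, and M ≥ 0. Let φ_M(E) = diag(min(e_1,M),…,min(e_N,M)) and ‖D‖ = max_i |d_i|. Then I_N(D, φ_M(E)) · exp(−N·‖D‖·tr(E − φ_M(E))) ≤ I_N(D,E) ≤ I_N(D, φ_M(E)). -/
import Mathlib


/-- Matrices are endowed with the Borel sigma-algebra of their (entrywise) topology. -/
noncomputable instance matrixMeasurableSpace {m n α : Type*} [TopologicalSpace α] :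
    MeasurableSpace (Matrix m n α) := borel _

/-- The spherical integral `I_N(C, D) = ∫_{U(N)} exp (N • tr (U C U⋆ D)) dμ(U)`,
with respect to a measure `μ` on the unitary group (real part is taken; for the
matrices considered here the trace is real). -/
noncomputable def sphInt (N : ℕ) (μ : MeasureTheory.Measure (Matrix.unitaryGroup (Fin N) ℂ))
    (C D : Matrix (Fin N) (Fin N) ℂ) : ℝ :=
  ∫ U, Real.exp ((N : ℝ) * (Matrix.trace ((U : Matrix (Fin N) (Fin N) ℂ) * C *
    star (U : Matrix (Fin N) (Fin N) ℂ) * D)).re) ∂μ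

open MeasureTheory

instance matrixBorelSpace {m n α : Type*} [TopologicalSpace α] :
    BorelSpace (Matrix m n α) := ⟨rfl⟩

instance unitaryGroupOpensMeasurable (N : ℕ) :
    OpensMeasurableSpace (Matrix.unitaryGroup (Fin N) ℂ) :=
  Subtype.opensMeasurableSpace _

lemma trace_re_eq (N : ℕ) (V : Matrix (Fin N) (Fin N) ℂ) (a b : Fin N → ℝ) :
    (Matrix.trace (V * Matrix.diagonal (fun i => (a i : ℂ)) *
      star V * Matrix.diagonal (fun i => (b i : ℂ)))).re
    = ∑ i, ∑ j, a j * b i * Complex.normSq (V i j) := by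
  have h1 : ∀ i : Fin N, (V * Matrix.diagonal (fun i => (a i : ℂ)) * star V *
      Matrix.diagonal (fun i => (b i : ℂ))) i i
      = ∑ j, V i j * (a j : ℂ) * (starRingEnd ℂ) (V i j) * (b i : ℂ) := by
    intro i
    rw [Matrix.mul_diagonal, Matrix.mul_apply, Finset.sum_mul]
    refine Finset.sum_congr rfl fun j _ => ?_
    rw [Matrix.mul_diagonal, Matrix.star_apply, Complex.star_def]
  rw [Matrix.trace, Complex.re_sum]
  refine Finset.sum_congr rfl fun i _ => ?_
  rw [Matrix.diag, h1, Complex.re_sum]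
  refine Finset.sum_congr rfl fun j _ => ?_
  simp [Complex.mul_re, Complex.mul_im, Complex.normSq_apply]
  ring

lemma row_normSq (N : ℕ) (U : Matrix.unitaryGroup (Fin N) ℂ) (i : Fin N) :
    ∑ j, Complex.normSq ((U : Matrix (Fin N) (Fin N) ℂ) i j) = 1 := by
  have h : (U : Matrix (Fin N) (Fin N) ℂ) * star (U : Matrix (Fin N) (Fin N) ℂ) = 1 :=
    Matrix.mem_unitaryGroup_iff.mp U.2
  have hii := congrFun (congrFun h i) i
  rw [Matrix.mul_apply] at hii
  have h2 : (∑ j, (U : Matrix (Fin N) (Fin N) ℂ) i j *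
      star ((U : Matrix (Fin N) (Fin N) ℂ)) j i).re = 1 := by
    rw [hii]; simp
  rw [Complex.re_sum] at h2
  rw [← h2]
  refine Finset.sum_congr rfl fun j _ => ?_
  rw [Matrix.star_apply, Complex.star_def, Complex.mul_conj]
  simp

lemma sph_integrable (N : ℕ) (m : Measure (Matrix.unitaryGroup (Fin N) ℂ))
    [IsProbabilityMeasure m] (d e' : Fin N → ℝ) (hd : ∀ i, d i ≤ 0) (he' : ∀ i, 0 ≤ e' i) :
    Integrable (fun U : Matrix.unitaryGroup (Fin N) ℂ =>
      Real.exp ((N : ℝ) * (Matrix.trace ((U : Matrix (Fin N) (Fin N) ℂ) *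
        Matrix.diagonal (fun i => (d i : ℂ)) * star (U : Matrix (Fin N) (Fin N) ℂ) *
        Matrix.diagonal (fun i => (e' i : ℂ)))).re)) m := by
  have hc : Continuous (fun U : Matrix.unitaryGroup (Fin N) ℂ =>
      Real.exp ((N : ℝ) * (Matrix.trace ((U : Matrix (Fin N) (Fin N) ℂ) *
        Matrix.diagonal (fun i => (d i : ℂ)) * star (U : Matrix (Fin N) (Fin N) ℂ) *
        Matrix.diagonal (fun i => (e' i : ℂ)))).re)) := by
    apply Real.continuous_exp.comp
    apply Continuous.mul continuous_const
    exact Complex.continuous_re.comp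
      ((((continuous_subtype_val.matrix_mul continuous_const).matrix_mul
        continuous_subtype_val.star).matrix_mul continuous_const).matrix_trace)
  refine (integrable_const (1 : ℝ)).mono' hc.aestronglyMeasurable
    (Filter.Eventually.of_forall fun U => ?_)
  rw [Real.norm_eq_abs, Real.abs_exp]
  refine Real.exp_le_one_iff.mpr ?_
  have hf : (Matrix.trace ((U : Matrix (Fin N) (Fin N) ℂ) *
      Matrix.diagonal (fun i => (d i : ℂ)) * star (U : Matrix (Fin N) (Fin N) ℂ) *
      Matrix.diagonal (fun i => (e' i : ℂ)))).re ≤ 0 := by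
    rw [trace_re_eq]
    refine Finset.sum_nonpos fun i _ => Finset.sum_nonpos fun j _ => ?_
    have hn := Complex.normSq_nonneg ((U : Matrix (Fin N) (Fin N) ℂ) i j)
    nlinarith [mul_nonneg (neg_nonneg.2 (hd j)) (mul_nonneg (he' i) hn)]
  have h0 : (0 : ℝ) ≤ (N : ℝ) := Nat.cast_nonneg N
  nlinarith

/-- **Truncation bounds for spherical integrals.** With `D = diag d ≤ 0`, `E = diag e ≥ 0`,
`M ≥ 0`, `φ_M(E) = diag (min e_i M)` and `‖D‖ = max_i |d_i|`,
`I_N(D, φ_M(E)) · exp (-N ‖D‖ tr (E - φ_M(E))) ≤ I_N(D, E) ≤ I_N(D, φ_M(E))`. -/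
theorem spherical_integral_truncation (N : ℕ) (hN : 0 < N)
    (m : Measure (Matrix.unitaryGroup (Fin N) ℂ))
    [m.IsHaarMeasure] [IsProbabilityMeasure m]
    (d e : Fin N → ℝ) (hd : ∀ i, d i ≤ 0) (he : ∀ i, 0 ≤ e i)
    (M : ℝ) (hM : 0 ≤ M)
    (K : ℝ) (hK : IsGreatest (Set.range fun i => |d i|) K) :
    sphInt N m (Matrix.diagonal (fun i => (d i : ℂ)))
        (Matrix.diagonal (fun i => ((min (e i) M : ℝ) : ℂ))) *
        Real.exp (-(N : ℝ) * K * ∑ i : Fin N, (e i - min (e i) M))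
      ≤ sphInt N m (Matrix.diagonal (fun i => (d i : ℂ)))
          (Matrix.diagonal (fun i => (e i : ℂ))) ∧
    sphInt N m (Matrix.diagonal (fun i => (d i : ℂ)))
        (Matrix.diagonal (fun i => (e i : ℂ)))
      ≤ sphInt N m (Matrix.diagonal (fun i => (d i : ℂ)))
          (Matrix.diagonal (fun i => ((min (e i) M : ℝ) : ℂ))) := by
  have he' : ∀ i, 0 ≤ min (e i) M := fun i => le_min (he i) hM
  have hee' : ∀ i, min (e i) M ≤ e i := fun i => min_le_left _ _
  have hInt1 := sph_integrable N m d e hd he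
  have hInt2 := sph_integrable N m d (fun i => min (e i) M) hd he'
  have hN0 : (0 : ℝ) ≤ (N : ℝ) := Nat.cast_nonneg N
  constructor
  · -- lower bound
    rw [sphInt, sphInt, ← integral_mul_const]
    refine integral_mono (hInt2.mul_const _) hInt1 fun U => ?_
    rw [← Real.exp_add]
    refine Real.exp_le_exp.mpr ?_
    rw [trace_re_eq, trace_re_eq]
    set V : Matrix (Fin N) (Fin N) ℂ := (U : Matrix (Fin N) (Fin N) ℂ) with hV
    have key : ∀ i : Fin N,
        ∑ j, d j * min (e i) M * Complex.normSq (V i j) - K * (e i - min (e i) M)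
        ≤ ∑ j, d j * e i * Complex.normSq (V i j) := by
      intro i
      have hrow := row_normSq N U i
      have h1 : ∀ j : Fin N,
          d j * min (e i) M * Complex.normSq (V i j) - d j * e i * Complex.normSq (V i j)
          ≤ K * (e i - min (e i) M) * Complex.normSq (V i j) := fun j => by
        have hdj : |d j| ≤ K := hK.2 ⟨j, rfl⟩
        have hnd : -d j ≤ K := le_trans (neg_le_abs (d j)) hdj
        have hfac : 0 ≤ (e i - min (e i) M) * Complex.normSq (V i j) :=
          mul_nonneg (by linarith [hee' i]) (Complex.normSq_nonneg _)
        nlinarith [mul_nonneg (by linarith : (0:ℝ) ≤ K + d j) hfac]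
      have h2 := Finset.sum_le_sum (fun j (_ : j ∈ Finset.univ) => h1 j)
      rw [Finset.sum_sub_distrib, ← Finset.mul_sum] at h2
      rw [hV] at h2
      rw [hrow, mul_one] at h2
      linarith
    have hsum := Finset.sum_le_sum (fun i (_ : i ∈ Finset.univ) => key i)
    rw [Finset.sum_sub_distrib, ← Finset.mul_sum] at hsum
    nlinarith [hsum]
  · -- upper bound
    refine integral_mono hInt1 hInt2 fun U => ?_
    refine Real.exp_le_exp.mpr ?_
    rw [trace_re_eq, trace_re_eq]
    have hpt : ∀ i j : Fin N,
        d j * e i * Complex.normSq ((U : Matrix (Fin N) (Fin N) ℂ) i j)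
        ≤ d j * min (e i) M * Complex.normSq ((U : Matrix (Fin N) (Fin N) ℂ) i j) := fun i j => by
      have hn := Complex.normSq_nonneg ((U : Matrix (Fin N) (Fin N) ℂ) i j)
      nlinarith [mul_nonneg (mul_nonneg (neg_nonneg.2 (hd j)) (by linarith [hee' i] : (0:ℝ) ≤ e i - min (e i) M)) hn]
    have hsum := Finset.sum_le_sum (fun i (_ : i ∈ Finset.univ) =>
      Finset.sum_le_sum (fun j (_ : j ∈ Finset.univ) => hpt i j))
    nlinarith [hsum]
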